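/- There exist nonzero scalars ε_0, ε_1 ∈ 𝕂, a nonnegative integer d, and a decomposition U_0, …, U_d of V (a sequence of nonzero subspaces with V = U_0 ⊕ ⋯ ⊕ U_d; set U_{−1} = 0, U_{d+1} = 0) such that (k_0 − ε_0 q^{2i−d}I)U_i = 0 and (k_1 − ε_1 q^{d−2i}I)U_i = 0 for 0 ≤ i ≤ d. The data ε_0, ε_1; U_0, …, U_d is uniquely determined. Moreover, for 0 ≤ i ≤ d: (ε_0 y_0^+ − q^{d−2i}I)U_i ⊆ U_{i+1}, (ε_1 y_1^− − q^{2i−d}I)U_i ⊆ U_{i+1}, (ε_0 y_0^− − q^{d−2i}I)U_i ⊆ U_{i−1}, and (ε_1 y_1^+ − q^{2i−d}I)U_i ⊆ U_{i−1}. -/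

import Mathlib

noncomputable section

open Submodule

variable {K : Type*} [Field K]

/-- `[n]_q = (q^n − q^{−n})/(q − q^{−1})`. -/
def qInt (q : K) (n : ℤ) : K := (q ^ n - q ^ (-n)) / (q - q⁻¹)

/-- Elements `y₀⁺, y₁⁺, y₀⁻, y₁⁻, k₀, k₀⁻¹, k₁, k₁⁻¹` of a unital associative `K`-algebra
satisfy the alternate relations. -/
structure AlternateRelations (q : K) {A : Type*} [Ring A] [Algebra K A]
    (yp ym k kinv : Fin 2 → A) : Prop where
  k_kinv : ∀ i, k i * kinv i = 1
  kinv_k : ∀ i, kinv i * k i = 1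
  central_yp : ∀ i, k 0 * k 1 * yp i = yp i * (k 0 * k 1)
  central_ym : ∀ i, k 0 * k 1 * ym i = ym i * (k 0 * k 1)
  central_k : ∀ i, k 0 * k 1 * k i = k i * (k 0 * k 1)
  central_kinv : ∀ i, k 0 * k 1 * kinv i = kinv i * (k 0 * k 1)
  rel_yp_k : ∀ i, (q - q⁻¹)⁻¹ • (q • (yp i * k i) - q⁻¹ • (k i * yp i)) = 1
  rel_k_ym : ∀ i, (q - q⁻¹)⁻¹ • (q • (k i * ym i) - q⁻¹ • (ym i * k i)) = 1
  rel_ym_yp : ∀ i, (q - q⁻¹)⁻¹ • (q • (ym i * yp i) - q⁻¹ • (yp i * ym i)) = 1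
  rel_yp_ym : ∀ i j, i ≠ j →
    (q - q⁻¹)⁻¹ • (q • (yp i * ym j) - q⁻¹ • (ym j * yp i)) = kinv 0 * kinv 1
  serre_p : ∀ i j, i ≠ j →
    yp i ^ 3 * yp j - qInt q 3 • (yp i ^ 2 * yp j * yp i)
      + qInt q 3 • (yp i * yp j * yp i ^ 2) - yp j * yp i ^ 3 = 0
  serre_m : ∀ i j, i ≠ j →
    ym i ^ 3 * ym j - qInt q 3 • (ym i ^ 2 * ym j * ym i)
      + qInt q 3 • (ym i * ym j * ym i ^ 2) - ym j * ym i ^ 3 = 0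

/-- Elements `e₀⁺, e₁⁺, e₀⁻, e₁⁻, K₀, K₀⁻¹, K₁, K₁⁻¹` of a unital associative `K`-algebra
satisfy the Chevalley relations of `U_q(sl₂ hat)`. -/
structure ChevalleyRelations (q : K) {A : Type*} [Ring A] [Algebra K A]
    (ep em Kg Kginv : Fin 2 → A) : Prop where
  K_Kinv : ∀ i, Kg i * Kginv i = 1
  Kinv_K : ∀ i, Kginv i * Kg i = 1
  K_comm : Kg 0 * Kg 1 = Kg 1 * Kg 0
  KepK_same : ∀ i, Kg i * ep i * Kginv i = (q ^ (2 : ℤ)) • ep i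
  KemK_same : ∀ i, Kg i * em i * Kginv i = (q ^ (-2 : ℤ)) • em i
  KepK_diff : ∀ i j, i ≠ j → Kg i * ep j * Kginv i = (q ^ (-2 : ℤ)) • ep j
  KemK_diff : ∀ i j, i ≠ j → Kg i * em j * Kginv i = (q ^ (2 : ℤ)) • em j
  e_comm_same : ∀ i, ep i * em i - em i * ep i = (q - q⁻¹)⁻¹ • (Kg i - Kginv i)
  e_comm_diff : ∀ i j, i ≠ j → ep i * em j = em j * ep i
  serre_p : ∀ i j, i ≠ j →
    ep i ^ 3 * ep j - qInt q 3 • (ep i ^ 2 * ep j * ep i)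
      + qInt q 3 • (ep i * ep j * ep i ^ 2) - ep j * ep i ^ 3 = 0
  serre_m : ∀ i j, i ≠ j →
    em i ^ 3 * em j - qInt q 3 • (em i ^ 2 * em j * em i)
      + qInt q 3 • (em i * em j * em i ^ 2) - em j * em i ^ 3 = 0

variable {V : Type*} [AddCommGroup V] [Module K V]

/-- A decomposition of `V` of length `d`: nonzero subspaces `U 0, …, U d`
(indexed by `ℤ`, with `U i = ⊥` outside `[0, d]`) whose direct sum is `V`. -/
structure IsDecomposition (d : ℕ) (U : ℤ → Submodule K V) : Prop where
  bot_of_lt : ∀ i : ℤ, i < 0 → U i = ⊥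
  bot_of_gt : ∀ i : ℤ, (d : ℤ) < i → U i = ⊥
  ne_bot : ∀ i : ℤ, 0 ≤ i → i ≤ (d : ℤ) → U i ≠ ⊥
  indep : iSupIndep U
  sup_eq_top : ⨆ i, U i = ⊤

/-- `A, A*` is a tridiagonal pair on `V` with standard orderings `Vs 0, …, Vs d` and
`Vs' 0, …, Vs' d` of the eigenspaces of `A` resp. `A*`, with corresponding eigenvalues
`θ i` resp. `θ' i`. -/
structure IsTridiagonalPair (A A' : Module.End K V) (d : ℕ)
    (Vs Vs' : ℤ → Submodule K V) (θ θ' : ℤ → K) : Prop where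
  decompV : IsDecomposition d Vs
  decompV' : IsDecomposition d Vs'
  eig : ∀ i : ℤ, ∀ v ∈ Vs i, A v = θ i • v
  eig' : ∀ i : ℤ, ∀ v ∈ Vs' i, A' v = θ' i • v
  theta_inj : ∀ i j : ℤ, 0 ≤ i → i ≤ (d : ℤ) → 0 ≤ j → j ≤ (d : ℤ) → θ i = θ j → i = j
  theta'_inj : ∀ i j : ℤ, 0 ≤ i → i ≤ (d : ℤ) → 0 ≤ j → j ≤ (d : ℤ) → θ' i = θ' j → i = j
  trid : ∀ i : ℤ, (Vs i).map A' ≤ Vs (i - 1) ⊔ Vs i ⊔ Vs (i + 1)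
  trid' : ∀ i : ℤ, (Vs' i).map A ≤ Vs' (i - 1) ⊔ Vs' i ⊔ Vs' (i + 1)
  irred : ∀ W : Submodule K V, W.map A ≤ W → W.map A' ≤ W → W = ⊥ ∨ W = ⊤

/-- The sum `U m + U (m+1) + ⋯ + U n`. -/
def sumIcc (U : ℤ → Submodule K V) (m n : ℤ) : Submodule K V :=
  ⨆ j ∈ Set.Icc m n, U j

/-- Decomposition `[0D]`: the `i`-th subspace is `V_i`. -/
def dec0D (Vs : ℤ → Submodule K V) : ℤ → Submodule K V := Vs

/-- Decomposition `[0*D*]`: the `i`-th subspace is `V*_i`. -/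
def dec0sDs (Vs' : ℤ → Submodule K V) : ℤ → Submodule K V := Vs'

/-- Decomposition `[0*D]`: the `i`-th subspace is `(V*_0+⋯+V*_i) ∩ (V_i+⋯+V_d)`. -/
def dec0sD (d : ℕ) (Vs Vs' : ℤ → Submodule K V) (i : ℤ) : Submodule K V :=
  sumIcc Vs' 0 i ⊓ sumIcc Vs i (d : ℤ)

/-- Decomposition `[0*0]`: the `i`-th subspace is `(V*_0+⋯+V*_i) ∩ (V_0+⋯+V_{d−i})`. -/
def dec0s0 (d : ℕ) (Vs Vs' : ℤ → Submodule K V) (i : ℤ) : Submodule K V :=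
  sumIcc Vs' 0 i ⊓ sumIcc Vs 0 ((d : ℤ) - i)

/-- Decomposition `[D*0]`: the `i`-th subspace is `(V*_{d−i}+⋯+V*_d) ∩ (V_0+⋯+V_{d−i})`. -/
def decDs0 (d : ℕ) (Vs Vs' : ℤ → Submodule K V) (i : ℤ) : Submodule K V :=
  sumIcc Vs' ((d : ℤ) - i) (d : ℤ) ⊓ sumIcc Vs 0 ((d : ℤ) - i)

/-- Decomposition `[D*D]`: the `i`-th subspace is `(V*_{d−i}+⋯+V*_d) ∩ (V_i+⋯+V_d)`. -/
def decDsD (d : ℕ) (Vs Vs' : ℤ → Submodule K V) (i : ℤ) : Submodule K V :=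
  sumIcc Vs' ((d : ℤ) - i) (d : ℤ) ⊓ sumIcc Vs i (d : ℤ)

section Aux

variable {K : Type*} [Field K] {V : Type*} [AddCommGroup V] [Module K V]

lemma my_zpow_eq_one {q : K} (hq0 : q ≠ 0) (hq : ∀ n : ℕ, 0 < n → q ^ n ≠ 1)
    {n : ℤ} (h : q ^ n = 1) : n = 0 := by
  rcases lt_trichotomy n 0 with hn | hn | hn
  · exfalso
    apply hq (-n).toNat (by omega)
    have : q ^ ((-n).toNat : ℤ) = 1 := by
      rw [Int.toNat_of_nonneg (by omega), zpow_neg, h, inv_one]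
    rwa [zpow_natCast] at this
  · exact hn
  · exfalso
    apply hq n.toNat (by omega)
    have : q ^ (n.toNat : ℤ) = 1 := by rw [Int.toNat_of_nonneg (by omega)]; exact h
    rwa [zpow_natCast] at this

lemma my_zpow_inj {q : K} (hq0 : q ≠ 0) (hq : ∀ n : ℕ, 0 < n → q ^ n ≠ 1)
    {a b : ℤ} (h : q ^ a = q ^ b) : a = b := by
  have : q ^ (a - b) = 1 := by
    rw [zpow_sub₀ hq0, h, div_self (zpow_ne_zero _ hq0)]
  have := my_zpow_eq_one hq0 hq this
  omega

lemma shift_eig {f g : Module.End K V} {μ θ : K} (hcomm : f * g = μ • (g * f))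
    {v : V} (hv : f v = θ • v) : f (g v) = (μ * θ) • g v := by
  have h := congrArg (fun T : Module.End K V => T v) hcomm
  simp only [Module.End.mul_apply, LinearMap.smul_apply] at h
  rw [h, hv, map_smul, smul_smul]

lemma comm_raise {q : K} (hq0 : q ≠ 0) {A : Type*} [Ring A] [Algebra K A]
    {y k kinv : A} (h1 : q • (y * k) - q⁻¹ • (k * y) = (q - q⁻¹) • (1 : A))
    (hk1 : k * kinv = 1) (hk2 : kinv * k = 1) :
    k * (y - kinv) = (q * q) • ((y - kinv) * k) := by
  have h2 : k * y = (q * q) • (y * k) - (q * (q - q⁻¹)) • (1 : A) := by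
    have h3 : q⁻¹ • (k * y) = q • (y * k) - (q - q⁻¹) • (1 : A) := by
      rw [← h1]; abel
    calc k * y = q • (q⁻¹ • (k * y)) := by rw [smul_smul, mul_inv_cancel₀ hq0, one_smul]
    _ = q • (q • (y * k) - (q - q⁻¹) • (1 : A)) := by rw [h3]
    _ = (q * q) • (y * k) - (q * (q - q⁻¹)) • (1 : A) := by
        rw [smul_sub, smul_smul, smul_smul]
  have hq' : q * (q - q⁻¹) = q * q - 1 := by field_simp
  rw [mul_sub, sub_mul, hk1, hk2, h2, hq']
  module

lemma flip_comm {μ : K} (hμ : μ ≠ 0) {A : Type*} [Ring A] [Algebra K A]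
    {k kinv X : A} (hk1 : k * kinv = 1) (hk2 : kinv * k = 1)
    (h : kinv * X = μ • (X * kinv)) : k * X = μ⁻¹ • (X * k) := by
  have h' : k * (kinv * X) * k = μ • (k * X) := by
    rw [h, mul_smul_comm, smul_mul_assoc, mul_assoc, mul_assoc, hk2, mul_one]
  rw [← mul_assoc, hk1, one_mul] at h'
  rw [h', smul_smul, inv_mul_cancel₀ hμ, one_smul]

end Aux

/-- existence and uniqueness of the weight space decomposition
of a finite dimensional irreducible `U_q(sl₂ hat)`-module. -/
theorem stmt15 {K : Type*} [Field K] [IsAlgClosed K]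
    {V : Type*} [AddCommGroup V] [Module K V] [FiniteDimensional K V] [Nontrivial V]
    (q : K) (hq0 : q ≠ 0) (hq : ∀ n : ℕ, 0 < n → q ^ n ≠ 1)
    (yp ym kk kkinv : Fin 2 → Module.End K V)
    (h : AlternateRelations q yp ym kk kkinv)
    (hirr : ∀ W : Submodule K V,
      (∀ i, Submodule.map (yp i) W ≤ W) → (∀ i, Submodule.map (ym i) W ≤ W) →
      (∀ i, Submodule.map (kk i) W ≤ W) → (∀ i, Submodule.map (kkinv i) W ≤ W) →
      W = ⊥ ∨ W = ⊤)
    :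
    ∃ (e0 e1 : K) (d : ℕ) (U : ℤ → Submodule K V),
      e0 ≠ 0 ∧ e1 ≠ 0 ∧ IsDecomposition d U ∧
      (∀ i : ℤ, Submodule.map (kk 0 - (e0 * q ^ (2 * i - (d : ℤ))) • 1) (U i) = ⊥) ∧
      (∀ i : ℤ, Submodule.map (kk 1 - (e1 * q ^ ((d : ℤ) - 2 * i)) • 1) (U i) = ⊥) ∧
      (∀ i : ℤ, Submodule.map (e0 • yp 0 - q ^ ((d : ℤ) - 2 * i) • 1) (U i) ≤ U (i + 1)) ∧
      (∀ i : ℤ, Submodule.map (e1 • ym 1 - q ^ (2 * i - (d : ℤ)) • 1) (U i) ≤ U (i + 1)) ∧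
      (∀ i : ℤ, Submodule.map (e0 • ym 0 - q ^ ((d : ℤ) - 2 * i) • 1) (U i) ≤ U (i - 1)) ∧
      (∀ i : ℤ, Submodule.map (e1 • yp 1 - q ^ (2 * i - (d : ℤ)) • 1) (U i) ≤ U (i - 1)) ∧
      (∀ (e0' e1' : K) (d' : ℕ) (U' : ℤ → Submodule K V),
        e0' ≠ 0 → e1' ≠ 0 → IsDecomposition d' U' →
        (∀ i : ℤ, Submodule.map (kk 0 - (e0' * q ^ (2 * i - (d' : ℤ))) • 1) (U' i) = ⊥) →
        (∀ i : ℤ, Submodule.map (kk 1 - (e1' * q ^ ((d' : ℤ) - 2 * i)) • 1) (U' i) = ⊥) →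
        e0' = e0 ∧ e1' = e1 ∧ d' = d ∧ U' = U) := by
  classical
  -- basic scalar facts
  have hqq : q - q⁻¹ ≠ 0 := by
    intro hh
    apply hq 2 (by norm_num)
    have : q = q⁻¹ := sub_eq_zero.mp hh
    calc q ^ 2 = q * q := sq q
    _ = q * q⁻¹ := by rw [← this]
    _ = 1 := mul_inv_cancel₀ hq0
  have hqq2 : q * q ≠ 0 := mul_ne_zero hq0 hq0
  have hqi0 : q⁻¹ ≠ 0 := inv_ne_zero hq0
  -- Schur : kk 0 * kk 1 = γ • 1
  obtain ⟨γ, hγeig⟩ := Module.End.exists_eigenvalue (kk 0 * kk 1)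
  have hWtop : Module.End.eigenspace (kk 0 * kk 1) γ = ⊤ := by
    have hWinv : ∀ f : Module.End K V, kk 0 * kk 1 * f = f * (kk 0 * kk 1) →
        Submodule.map f (Module.End.eigenspace (kk 0 * kk 1) γ) ≤
          Module.End.eigenspace (kk 0 * kk 1) γ := by
      intro f hf
      rintro _ ⟨v, hv, rfl⟩
      simp only [SetLike.mem_coe, Module.End.mem_eigenspace_iff, Module.End.mul_apply] at hv ⊢
      have h2 := congrArg (fun T : Module.End K V => T v) hf
      simp only [Module.End.mul_apply] at h2
      rw [h2, hv, map_smul]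
    rcases hirr _ (fun i => hWinv _ (h.central_yp i)) (fun i => hWinv _ (h.central_ym i))
      (fun i => hWinv _ (h.central_k i)) (fun i => hWinv _ (h.central_kinv i)) with hb | ht
    · exact absurd hb (Module.End.hasEigenvalue_iff.mp hγeig)
    · exact ht
  have hcγ : ∀ v : V, kk 0 (kk 1 v) = γ • v := by
    intro v
    have hv : v ∈ Module.End.eigenspace (kk 0 * kk 1) γ := hWtop ▸ Submodule.mem_top
    simpa only [Module.End.mul_apply] using Module.End.mem_eigenspace_iff.mp hv
  have happinv0 : ∀ w : V, kkinv 0 (kk 0 w) = w := by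
    intro w
    have := congrArg (fun T : Module.End K V => T w) (h.kinv_k 0)
    simpa only [Module.End.mul_apply, Module.End.one_apply] using this
  have happinv1 : ∀ w : V, kkinv 1 (kk 1 w) = w := by
    intro w
    have := congrArg (fun T : Module.End K V => T w) (h.kinv_k 1)
    simpa only [Module.End.mul_apply, Module.End.one_apply] using this
  have hγ0 : γ ≠ 0 := by
    intro h0
    obtain ⟨v, hv⟩ := exists_ne (0 : V)
    apply hv
    have : kkinv 1 (kkinv 0 (kk 0 (kk 1 v))) = v := by rw [happinv0, happinv1]
    rw [hcγ v, h0, zero_smul, map_zero, map_zero] at this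
    exact this.symm
  have hcE : kk 0 * kk 1 = γ • (1 : Module.End K V) := by
    ext v
    simpa only [Module.End.mul_apply, LinearMap.smul_apply, Module.End.one_apply] using hcγ v
  have hk1e : kk 1 = γ • kkinv 0 := by
    calc kk 1 = (kkinv 0 * kk 0) * kk 1 := by rw [h.kinv_k, one_mul]
    _ = kkinv 0 * (kk 0 * kk 1) := by rw [mul_assoc]
    _ = γ • kkinv 0 := by rw [hcE, mul_smul_comm, mul_one]
  have hk1k0 : kk 1 * kk 0 = γ • (1 : Module.End K V) := by
    rw [hk1e, smul_mul_assoc, h.kinv_k]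
  have hkinv1e : kkinv 1 = γ⁻¹ • kk 0 := by
    have h1 : kk 1 * (γ⁻¹ • kk 0) = 1 := by
      rw [mul_smul_comm, hk1k0, smul_smul, inv_mul_cancel₀ hγ0, one_smul]
    calc kkinv 1 = kkinv 1 * (kk 1 * (γ⁻¹ • kk 0)) := by rw [h1, mul_one]
    _ = (kkinv 1 * kk 1) * (γ⁻¹ • kk 0) := by rw [← mul_assoc]
    _ = γ⁻¹ • kk 0 := by rw [h.kinv_k, one_mul]
  -- normalized relations and shift operators
  have norm1 : ∀ {X : Module.End K V}, (q - q⁻¹)⁻¹ • X = 1 →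
      X = (q - q⁻¹) • (1 : Module.End K V) := by
    intro X hX
    calc X = (q - q⁻¹) • ((q - q⁻¹)⁻¹ • X) := by
          rw [smul_smul, mul_inv_cancel₀ hqq, one_smul]
    _ = (q - q⁻¹) • 1 := by rw [hX]
  set Ap : Module.End K V := yp 0 - kkinv 0 with hApdef
  set Am : Module.End K V := yp 1 - kkinv 1 with hAmdef
  set Bm : Module.End K V := ym 0 - kkinv 0 with hBmdef
  set Bp : Module.End K V := ym 1 - kkinv 1 with hBpdef
  have hlowform : ∀ i : Fin 2, q⁻¹ • (ym i * kk i) - (q⁻¹)⁻¹ • (kk i * ym i)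
      = (q⁻¹ - (q⁻¹)⁻¹) • (1 : Module.End K V) := by
    intro i
    have hx := norm1 (h.rel_k_ym i)
    rw [inv_inv]
    calc q⁻¹ • (ym i * kk i) - q • (kk i * ym i)
        = -(q • (kk i * ym i) - q⁻¹ • (ym i * kk i)) := by abel
    _ = -((q - q⁻¹) • (1 : Module.End K V)) := by rw [hx]
    _ = (q⁻¹ - q) • (1 : Module.End K V) := by module
  have comm_Ap : kk 0 * Ap = (q * q) • (Ap * kk 0) :=
    comm_raise hq0 (norm1 (h.rel_yp_k 0)) (h.k_kinv 0) (h.kinv_k 0)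
  have comm_Bm : kk 0 * Bm = (q⁻¹ * q⁻¹) • (Bm * kk 0) :=
    comm_raise hqi0 (hlowform 0) (h.k_kinv 0) (h.kinv_k 0)
  have comm_Am1 : kk 1 * Am = (q * q) • (Am * kk 1) :=
    comm_raise hq0 (norm1 (h.rel_yp_k 1)) (h.k_kinv 1) (h.kinv_k 1)
  have comm_Bp1 : kk 1 * Bp = (q⁻¹ * q⁻¹) • (Bp * kk 1) :=
    comm_raise hqi0 (hlowform 1) (h.k_kinv 1) (h.kinv_k 1)
  have conv : ∀ {X : Module.End K V} {μ : K}, kk 1 * X = μ • (X * kk 1) →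
      kkinv 0 * X = μ • (X * kkinv 0) := by
    intro X μ hX
    rw [hk1e, smul_mul_assoc, mul_smul_comm, smul_smul, mul_comm μ γ, ← smul_smul] at hX
    exact smul_right_injective _ hγ0 hX
  have comm_Am : kk 0 * Am = (q⁻¹ * q⁻¹) • (Am * kk 0) := by
    have := flip_comm hqq2 (h.k_kinv 0) (h.kinv_k 0) (conv comm_Am1)
    rwa [mul_inv] at this
  have comm_Bp : kk 0 * Bp = (q * q) • (Bp * kk 0) := by
    have h2 := flip_comm (mul_ne_zero hqi0 hqi0) (h.k_kinv 0) (h.kinv_k 0) (conv comm_Bp1)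
    rw [h2]
    congr 1
    field_simp
  -- eigenvalue of kk 0
  obtain ⟨θ0, hθ0⟩ := Module.End.exists_eigenvalue (kk 0)
  have hθ0bot : Module.End.eigenspace (kk 0) θ0 ≠ ⊥ := Module.End.hasEigenvalue_iff.mp hθ0
  have hθ00 : θ0 ≠ 0 := by
    intro h0
    obtain ⟨v, hv⟩ := hθ0.exists_hasEigenvector
    apply hv.2
    have h1 := hv.apply_eq_smul
    rw [h0, zero_smul] at h1
    calc v = kkinv 0 (kk 0 v) := (happinv0 v).symm
    _ = 0 := by rw [h1, map_zero]
  set W : ℤ → Submodule K V := fun j => Module.End.eigenspace (kk 0) (θ0 * q ^ (2 * j))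
    with hWdef
  have hθj0 : ∀ j : ℤ, θ0 * q ^ (2 * j) ≠ 0 := fun j => mul_ne_zero hθ00 (zpow_ne_zero _ hq0)
  have hWinj : Function.Injective fun j : ℤ => θ0 * q ^ (2 * j) := by
    intro a b hab
    have h1 : q ^ (2 * a) = q ^ (2 * b) := mul_left_cancel₀ hθ00 hab
    have := my_zpow_inj hq0 hq h1
    omega
  have hWind : iSupIndep W := (Module.End.eigenspaces_iSupIndep (kk 0)).comp hWinj
  have hmemW : ∀ {j : ℤ} {v : V}, v ∈ W j ↔ kk 0 v = (θ0 * q ^ (2 * j)) • v :=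
    fun {j v} => Module.End.mem_eigenspace_iff
  have hstepup : ∀ (c : K) (j : ℤ), (q * q) * (c * q ^ (2 * j)) = c * q ^ (2 * (j + 1)) := by
    intro c j
    rw [show 2 * (j + 1) = 2 * j + 2 by ring, zpow_add₀ hq0,
      show (2:ℤ) = ((2:ℕ):ℤ) by norm_num, zpow_natCast, sq]
    ring
  have hstepdown : ∀ (c : K) (j : ℤ), (q⁻¹ * q⁻¹) * (c * q ^ (2 * j)) = c * q ^ (2 * (j - 1)) := by
    intro c j
    rw [show 2 * j = 2 * (j - 1) + 2 by ring, zpow_add₀ hq0,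
      show (2:ℤ) = ((2:ℕ):ℤ) by norm_num, zpow_natCast, sq]
    field_simp
  have hApW : ∀ {j : ℤ} {v : V}, v ∈ W j → Ap v ∈ W (j + 1) := by
    intro j v hv
    rw [hmemW] at hv ⊢
    rw [shift_eig comm_Ap hv, hstepup]
  have hBpW : ∀ {j : ℤ} {v : V}, v ∈ W j → Bp v ∈ W (j + 1) := by
    intro j v hv
    rw [hmemW] at hv ⊢
    rw [shift_eig comm_Bp hv, hstepup]
  have hAmW : ∀ {j : ℤ} {v : V}, v ∈ W j → Am v ∈ W (j - 1) := by
    intro j v hv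
    rw [hmemW] at hv ⊢
    rw [shift_eig comm_Am hv, hstepdown]
  have hBmW : ∀ {j : ℤ} {v : V}, v ∈ W j → Bm v ∈ W (j - 1) := by
    intro j v hv
    rw [hmemW] at hv ⊢
    rw [shift_eig comm_Bm hv, hstepdown]
  have hkinvW : ∀ {j : ℤ} {v : V}, v ∈ W j → kkinv 0 v = (θ0 * q ^ (2 * j))⁻¹ • v := by
    intro j v hv
    rw [hmemW] at hv
    have h1 : kkinv 0 (kk 0 v) = v := happinv0 v
    rw [hv, map_smul] at h1
    calc kkinv 0 v = (θ0 * q ^ (2 * j))⁻¹ • ((θ0 * q ^ (2 * j)) • kkinv 0 v) := by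
          rw [smul_smul, inv_mul_cancel₀ (hθj0 j), one_smul]
    _ = (θ0 * q ^ (2 * j))⁻¹ • v := by rw [h1]
  have happAp : ∀ v : V, yp 0 v = Ap v + kkinv 0 v := fun v => by
    rw [hApdef, LinearMap.sub_apply]; abel
  have happAm : ∀ v : V, yp 1 v = Am v + kkinv 1 v := fun v => by
    rw [hAmdef, LinearMap.sub_apply]; abel
  have happBm : ∀ v : V, ym 0 v = Bm v + kkinv 0 v := fun v => by
    rw [hBmdef, LinearMap.sub_apply]; abel
  have happBp : ∀ v : V, ym 1 v = Bp v + kkinv 1 v := fun v => by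
    rw [hBpdef, LinearMap.sub_apply]; abel
  have happk1 : ∀ v : V, kk 1 v = γ • kkinv 0 v := fun v => by
    rw [hk1e]; rfl
  have happkinv1 : ∀ v : V, kkinv 1 v = γ⁻¹ • kk 0 v := fun v => by
    rw [hkinv1e]; rfl
  -- stability of truncated sups
  have hSgen : ∀ (Ufam : ℤ → Submodule K V) (f : Module.End K V),
      (∀ (j : ℤ) (v : V), v ∈ Ufam j → f v ∈ ⨆ j', Ufam j') →
      Submodule.map f (⨆ j', Ufam j') ≤ ⨆ j', Ufam j' := by
    intro Ufam f hf
    rw [Submodule.map_iSup]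
    refine iSup_le fun j => ?_
    rintro _ ⟨v, hv, rfl⟩
    exact hf j v hv
  have hstable : ∀ g : ℤ, W g = ⊥ →
      (⨆ j : ℤ, (if j < g then W j else ⊥)) = ⊥ ∨
        (⨆ j : ℤ, (if j < g then W j else ⊥)) = ⊤ := by
    intro g hg
    set T : ℤ → Submodule K V := fun j => if j < g then W j else ⊥ with hTdef
    have hTle : ∀ j : ℤ, j < g → W j ≤ ⨆ j', T j' := by
      intro j hj
      refine le_trans ?_ (le_iSup T j)
      simp only [hTdef, if_pos hj]
      exact le_rfl
    have hTup : ∀ (j : ℤ) (v : V), j < g → v ∈ W (j + 1) → v ∈ ⨆ j', T j' := by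
      intro j v hj hv
      rcases lt_or_eq_of_le (by omega : j + 1 ≤ g) with h1 | h1
      · exact hTle _ h1 hv
      · rw [h1, hg, Submodule.mem_bot] at hv
        rw [hv]
        exact Submodule.zero_mem _
    have hTdown : ∀ (j : ℤ) (v : V), j < g → v ∈ W (j - 1) → v ∈ ⨆ j', T j' :=
      fun j v hj hv => hTle _ (by omega) hv
    have hTel : ∀ (j : ℤ) (v : V), v ∈ T j → v = 0 ∨ (j < g ∧ v ∈ W j) := by
      intro j v hv
      by_cases hj : j < g
      · right
        refine ⟨hj, ?_⟩
        simpa only [hTdef, if_pos hj] using hv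
      · left
        simpa only [hTdef, if_neg hj, Submodule.mem_bot] using hv
    apply hirr
    · intro i
      apply hSgen
      intro j v hv
      rcases hTel j v hv with rfl | ⟨hj, hv⟩
      · rw [map_zero]; exact Submodule.zero_mem _
      fin_cases i
      · show yp 0 v ∈ ⨆ j', T j'
        rw [happAp v]
        refine Submodule.add_mem _ (hTup j _ hj (hApW hv)) ?_
        rw [hkinvW hv]
        exact Submodule.smul_mem _ _ (hTle j hj hv)
      · show yp 1 v ∈ ⨆ j', T j'
        rw [happAm v]
        refine Submodule.add_mem _ (hTdown j _ hj (hAmW hv)) ?_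
        rw [happkinv1 v, hmemW.mp hv]
        exact Submodule.smul_mem _ _ (Submodule.smul_mem _ _ (hTle j hj hv))
    · intro i
      apply hSgen
      intro j v hv
      rcases hTel j v hv with rfl | ⟨hj, hv⟩
      · rw [map_zero]; exact Submodule.zero_mem _
      fin_cases i
      · show ym 0 v ∈ ⨆ j', T j'
        rw [happBm v]
        refine Submodule.add_mem _ (hTdown j _ hj (hBmW hv)) ?_
        rw [hkinvW hv]
        exact Submodule.smul_mem _ _ (hTle j hj hv)
      · show ym 1 v ∈ ⨆ j', T j'
        rw [happBp v]
        refine Submodule.add_mem _ (hTup j _ hj (hBpW hv)) ?_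
        rw [happkinv1 v, hmemW.mp hv]
        exact Submodule.smul_mem _ _ (Submodule.smul_mem _ _ (hTle j hj hv))
    · intro i
      apply hSgen
      intro j v hv
      rcases hTel j v hv with rfl | ⟨hj, hv⟩
      · rw [map_zero]; exact Submodule.zero_mem _
      fin_cases i
      · show kk 0 v ∈ ⨆ j', T j'
        rw [hmemW.mp hv]
        exact Submodule.smul_mem _ _ (hTle j hj hv)
      · show kk 1 v ∈ ⨆ j', T j'
        rw [happk1 v, hkinvW hv]
        exact Submodule.smul_mem _ _ (Submodule.smul_mem _ _ (hTle j hj hv))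
    · intro i
      apply hSgen
      intro j v hv
      rcases hTel j v hv with rfl | ⟨hj, hv⟩
      · rw [map_zero]; exact Submodule.zero_mem _
      fin_cases i
      · show kkinv 0 v ∈ ⨆ j', T j'
        rw [hkinvW hv]
        exact Submodule.smul_mem _ _ (hTle j hj hv)
      · show kkinv 1 v ∈ ⨆ j', T j'
        rw [happkinv1 v, hmemW.mp hv]
        exact Submodule.smul_mem _ _ (Submodule.smul_mem _ _ (hTle j hj hv))
  -- finiteness of the support
  have hJfin : {j : ℤ | W j ≠ ⊥}.Finite := by
    apply Set.Finite.subset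
      (Set.Finite.preimage hWinj.injOn (Module.End.finite_hasEigenvalue (kk 0)))
    intro j hj
    exact hj
  have hW0ne : W 0 ≠ ⊥ := by
    have h00 : θ0 * q ^ (2 * (0:ℤ)) = θ0 := by norm_num
    simp only [hWdef, h00]
    exact hθ0bot
  have hJfinne : hJfin.toFinset.Nonempty := by
    rw [Set.Finite.toFinset_nonempty]
    exact ⟨0, hW0ne⟩
  set m : ℤ := hJfin.toFinset.min' hJfinne with hmdef
  set M : ℤ := hJfin.toFinset.max' hJfinne with hMdef
  have hmJ : W m ≠ ⊥ := by
    have := hJfin.toFinset.min'_mem hJfinne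
    rwa [Set.Finite.mem_toFinset] at this
  have hMJ : W M ≠ ⊥ := by
    have := hJfin.toFinset.max'_mem hJfinne
    rwa [Set.Finite.mem_toFinset] at this
  have hmle : ∀ j : ℤ, W j ≠ ⊥ → m ≤ j := fun j hj =>
    hJfin.toFinset.min'_le j (by rwa [Set.Finite.mem_toFinset])
  have hleM : ∀ j : ℤ, W j ≠ ⊥ → j ≤ M := fun j hj =>
    hJfin.toFinset.le_max' j (by rwa [Set.Finite.mem_toFinset])
  have hmM : m ≤ M := hmle M hMJ
  have hMsucc : W (M + 1) = ⊥ := by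
    by_contra hc
    have := hleM _ hc
    omega
  have hfull : (⨆ j : ℤ, W j) = ⊤ := by
    rcases hstable (M + 1) hMsucc with hb | ht
    · exfalso
      apply hmJ
      have h1 : W m ≤ ⨆ j : ℤ, (if j < M + 1 then W j else ⊥) := by
        refine le_trans ?_ (le_iSup _ m)
        simp only [if_pos (show m < M + 1 by omega)]
        exact le_rfl
      rw [hb, le_bot_iff] at h1
      exact h1
    · rw [eq_top_iff, ← ht]
      refine iSup_le fun j => ?_
      by_cases hj : j < M + 1
      · simp only [if_pos hj]
        exact le_iSup W j
      · simp only [if_neg hj]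
        exact bot_le
  have hcontig : ∀ g : ℤ, m ≤ g → g ≤ M → W g ≠ ⊥ := by
    intro g hmg hgM hg
    have hmg' : m < g := lt_of_le_of_ne hmg (by rintro rfl; exact hmJ hg)
    have hgM' : g < M := lt_of_le_of_ne hgM (by rintro rfl; exact hMJ hg)
    rcases hstable g hg with hb | ht
    · apply hmJ
      have h1 : W m ≤ ⨆ j : ℤ, (if j < g then W j else ⊥) := by
        refine le_trans ?_ (le_iSup _ m)
        simp only [if_pos hmg']
        exact le_rfl
      rw [hb, le_bot_iff] at h1
      exact h1
    · apply hMJ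
      have hdisj : Disjoint (W M) (⨆ j : ℤ, (if j < g then W j else ⊥)) := by
        have hind := iSupIndep_def.mp (Module.End.eigenspaces_iSupIndep (kk 0))
          (θ0 * q ^ (2 * M))
        have hle2 : (⨆ j : ℤ, (if j < g then W j else ⊥)) ≤
            ⨆ μ, ⨆ _ : μ ≠ θ0 * q ^ (2 * M), Module.End.eigenspace (kk 0) μ := by
          refine iSup_le fun j => ?_
          by_cases hj : j < g
          · simp only [if_pos hj]
            have hne : θ0 * q ^ (2 * j) ≠ θ0 * q ^ (2 * M) := by
              intro hc
              have h3 : j = M := hWinj hc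
              omega
            refine le_trans ?_ (le_iSup_of_le (θ0 * q ^ (2 * j)) (le_iSup_of_le hne le_rfl))
            simp only [hWdef]
            exact le_rfl
          · simp only [if_neg hj]
            exact bot_le
        have hWM : W M = Module.End.eigenspace (kk 0) (θ0 * q ^ (2 * M)) := by
          simp only [hWdef]
        rw [hWM]
        exact hind.mono_right hle2
      have h1 : W M ≤ ⨆ j : ℤ, (if j < g then W j else ⊥) := ht ▸ le_top
      exact hdisj.eq_bot_of_le h1
  -- the decomposition data
  set d : ℕ := (M - m).toNat with hddef
  have hdm : (d : ℤ) = M - m := by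
    rw [hddef]
    exact Int.toNat_of_nonneg (by omega)
  set ε0 : K := θ0 * q ^ (2 * m + (d : ℤ)) with hε0def
  have hε00 : ε0 ≠ 0 := mul_ne_zero hθ00 (zpow_ne_zero _ hq0)
  have hε0q : ∀ i : ℤ, ε0 * q ^ (2 * i - (d : ℤ)) = θ0 * q ^ (2 * (m + i)) := by
    intro i
    rw [hε0def, mul_assoc, ← zpow_add₀ hq0]
    congr 1
    ring
  set ε1 : K := γ * ε0⁻¹ with hε1def
  have hε10 : ε1 ≠ 0 := mul_ne_zero hγ0 (inv_ne_zero hε00)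
  set U : ℤ → Submodule K V := fun i => W (m + i) with hUdef
  have hUE : ∀ i : ℤ, U i = Module.End.eigenspace (kk 0) (ε0 * q ^ (2 * i - (d : ℤ))) := by
    intro i
    rw [hε0q i]
  have hmemU : ∀ {i : ℤ} {v : V}, v ∈ U i ↔ kk 0 v = (ε0 * q ^ (2 * i - (d : ℤ))) • v := by
    intro i v
    rw [hUE i]
    exact Module.End.mem_eigenspace_iff
  have hUbotlt : ∀ i : ℤ, i < 0 → U i = ⊥ := by
    intro i hi
    by_contra hc
    have := hmle (m + i) (by simpa only [hUdef] using hc)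
    omega
  have hUbotgt : ∀ i : ℤ, (d : ℤ) < i → U i = ⊥ := by
    intro i hi
    by_contra hc
    have := hleM (m + i) (by simpa only [hUdef] using hc)
    omega
  have hUne : ∀ i : ℤ, 0 ≤ i → i ≤ (d : ℤ) → U i ≠ ⊥ := by
    intro i h0 hd
    have := hcontig (m + i) (by omega) (by omega)
    simpa only [hUdef] using this
  have hUind : iSupIndep U := by
    have h1 : Function.Injective fun i : ℤ => θ0 * q ^ (2 * (m + i)) := by
      intro a b hab
      have h3 : m + a = m + b := hWinj hab
      omega
    have h2 := (Module.End.eigenspaces_iSupIndep (kk 0)).comp h1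
    simpa only [Function.comp_def, hUdef, hWdef] using h2
  have hUsup : (⨆ i : ℤ, U i) = ⊤ := by
    rw [eq_top_iff, ← hfull]
    refine iSup_le fun j => ?_
    have h1 : W j = U (j - m) := by
      simp only [hUdef]
      congr 1
      omega
    rw [h1]
    exact le_iSup U (j - m)
  have hdecomp : IsDecomposition d U := ⟨hUbotlt, hUbotgt, hUne, hUind, hUsup⟩
  -- shift lemmas for U
  have hApU : ∀ {i : ℤ} {v : V}, v ∈ U i → Ap v ∈ U (i + 1) := by
    intro i v hv
    have h1 : Ap v ∈ W (m + i + 1) := hApW (by simpa only [hUdef] using hv)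
    simp only [hUdef]
    rw [show m + (i + 1) = m + i + 1 by ring]
    exact h1
  have hBpU : ∀ {i : ℤ} {v : V}, v ∈ U i → Bp v ∈ U (i + 1) := by
    intro i v hv
    have h1 : Bp v ∈ W (m + i + 1) := hBpW (by simpa only [hUdef] using hv)
    simp only [hUdef]
    rw [show m + (i + 1) = m + i + 1 by ring]
    exact h1
  have hAmU : ∀ {i : ℤ} {v : V}, v ∈ U i → Am v ∈ U (i - 1) := by
    intro i v hv
    have h1 : Am v ∈ W (m + i - 1) := hAmW (by simpa only [hUdef] using hv)
    simp only [hUdef]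
    rw [show m + (i - 1) = m + i - 1 by ring]
    exact h1
  have hBmU : ∀ {i : ℤ} {v : V}, v ∈ U i → Bm v ∈ U (i - 1) := by
    intro i v hv
    have h1 : Bm v ∈ W (m + i - 1) := hBmW (by simpa only [hUdef] using hv)
    simp only [hUdef]
    rw [show m + (i - 1) = m + i - 1 by ring]
    exact h1
  have hkinvU : ∀ {i : ℤ} {v : V}, v ∈ U i → kkinv 0 v = (ε0 * q ^ (2 * i - (d:ℤ)))⁻¹ • v := by
    intro i v hv
    have h1 := hkinvW (j := m + i) (by simpa only [hUdef] using hv)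
    rwa [← hε0q i] at h1
  refine ⟨ε0, ε1, d, U, hε00, hε10, hdecomp, ?_, ?_, ?_, ?_, ?_, ?_, ?_⟩
  · intro i
    rw [Submodule.eq_bot_iff]
    rintro _ ⟨v, hv, rfl⟩
    rw [LinearMap.sub_apply, LinearMap.smul_apply, Module.End.one_apply, hmemU.mp hv, sub_self]
  · intro i
    have hsc : γ * (ε0 * q ^ (2 * i - (d:ℤ)))⁻¹ = ε1 * q ^ ((d:ℤ) - 2 * i) := by
      rw [hε1def, mul_inv, ← zpow_neg, ← mul_assoc]
      congr 2
      ring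
    rw [Submodule.eq_bot_iff]
    rintro _ ⟨v, hv, rfl⟩
    rw [LinearMap.sub_apply, LinearMap.smul_apply, Module.End.one_apply, happk1 v, hkinvU hv,
      smul_smul, hsc, sub_self]
  · intro i
    rintro _ ⟨v, hv, rfl⟩
    have hsc : ε0 * (ε0 * q ^ (2 * i - (d:ℤ)))⁻¹ = q ^ ((d:ℤ) - 2 * i) := by
      rw [mul_inv, ← mul_assoc, mul_inv_cancel₀ hε00, one_mul, ← zpow_neg]
      congr 1
      ring
    have heq : (ε0 • yp 0 - q ^ ((d:ℤ) - 2 * i) • 1) v = ε0 • Ap v := by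
      rw [LinearMap.sub_apply, LinearMap.smul_apply, LinearMap.smul_apply, Module.End.one_apply,
        happAp v, smul_add, hkinvU hv, smul_smul, hsc]
      abel
    rw [heq]
    exact Submodule.smul_mem _ _ (hApU hv)
  · intro i
    rintro _ ⟨v, hv, rfl⟩
    have hsc : ε1 * γ⁻¹ * (ε0 * q ^ (2 * i - (d:ℤ))) = q ^ (2 * i - (d:ℤ)) := by
      rw [hε1def]
      field_simp
    have heq : (ε1 • ym 1 - q ^ (2 * i - (d:ℤ)) • 1) v = ε1 • Bp v := by
      rw [LinearMap.sub_apply, LinearMap.smul_apply, LinearMap.smul_apply, Module.End.one_apply,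
        happBp v, smul_add, happkinv1 v, hmemU.mp hv, smul_smul, smul_smul, hsc]
      abel
    rw [heq]
    exact Submodule.smul_mem _ _ (hBpU hv)
  · intro i
    rintro _ ⟨v, hv, rfl⟩
    have hsc : ε0 * (ε0 * q ^ (2 * i - (d:ℤ)))⁻¹ = q ^ ((d:ℤ) - 2 * i) := by
      rw [mul_inv, ← mul_assoc, mul_inv_cancel₀ hε00, one_mul, ← zpow_neg]
      congr 1
      ring
    have heq : (ε0 • ym 0 - q ^ ((d:ℤ) - 2 * i) • 1) v = ε0 • Bm v := by
      rw [LinearMap.sub_apply, LinearMap.smul_apply, LinearMap.smul_apply, Module.End.one_apply,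
        happBm v, smul_add, hkinvU hv, smul_smul, hsc]
      abel
    rw [heq]
    exact Submodule.smul_mem _ _ (hBmU hv)
  · intro i
    rintro _ ⟨v, hv, rfl⟩
    have hsc : ε1 * γ⁻¹ * (ε0 * q ^ (2 * i - (d:ℤ))) = q ^ (2 * i - (d:ℤ)) := by
      rw [hε1def]
      field_simp
    have heq : (ε1 • yp 1 - q ^ (2 * i - (d:ℤ)) • 1) v = ε1 • Am v := by
      rw [LinearMap.sub_apply, LinearMap.smul_apply, LinearMap.smul_apply, Module.End.one_apply,
        happAm v, smul_add, happkinv1 v, hmemU.mp hv, smul_smul, smul_smul, hsc]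
      abel
    rw [heq]
    exact Submodule.smul_mem _ _ (hAmU hv)
  · intro e0' e1' d' U' he0' he1' hdec' hk0' hk1'
    have hU'E : ∀ i : ℤ, ∀ v ∈ U' i, kk 0 v = (e0' * q ^ (2 * i - (d' : ℤ))) • v := by
      intro i v hv
      have h1 := hk0' i
      rw [Submodule.eq_bot_iff] at h1
      have h2 := h1 _ ⟨v, hv, rfl⟩
      rwa [LinearMap.sub_apply, LinearMap.smul_apply, Module.End.one_apply, sub_eq_zero] at h2
    have hU'le : ∀ i : ℤ, U' i ≤ Module.End.eigenspace (kk 0) (e0' * q ^ (2 * i - (d' : ℤ))) :=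
      fun i v hv => Module.End.mem_eigenspace_iff.mpr (hU'E i v hv)
    have hEbot : ∀ θ : K, Module.End.eigenspace (kk 0) θ ≠ ⊥ →
        ∃ j : ℤ, 0 ≤ j ∧ j ≤ (d:ℤ) ∧ θ = ε0 * q ^ (2 * j - (d:ℤ)) := by
      intro θ hθ
      by_cases hex : ∃ j : ℤ, θ = ε0 * q ^ (2 * j - (d:ℤ))
      · obtain ⟨j, rfl⟩ := hex
        refine ⟨j, ?_, ?_, rfl⟩
        · by_contra hj
          exact hθ (by rw [← hUE j]; exact hUbotlt j (by omega))
        · by_contra hj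
          exact hθ (by rw [← hUE j]; exact hUbotgt j (by omega))
      · push_neg at hex
        exfalso
        apply hθ
        have hind := iSupIndep_def.mp (Module.End.eigenspaces_iSupIndep (kk 0)) θ
        have hle2 : (⊤ : Submodule K V) ≤
            ⨆ μ, ⨆ _ : μ ≠ θ, Module.End.eigenspace (kk 0) μ := by
          rw [← hUsup]
          refine iSup_le fun i => ?_
          rw [hUE i]
          exact le_iSup_of_le (ε0 * q ^ (2 * i - (d:ℤ)))
            (le_iSup_of_le (Ne.symm (hex i)) le_rfl)
        exact hind.eq_bot_of_le (le_trans le_top hle2)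
    have hvalinj : ∀ a b : ℤ, ε0 * q ^ a = ε0 * q ^ b → a = b := fun a b hab =>
      my_zpow_inj hq0 hq (mul_left_cancel₀ hε00 hab)
    have hne0' : Module.End.eigenspace (kk 0) (e0' * q ^ (2 * 0 - (d' : ℤ))) ≠ ⊥ := by
      intro hb
      exact hdec'.ne_bot 0 le_rfl (Int.natCast_nonneg d') (le_bot_iff.mp (hb ▸ hU'le 0))
    obtain ⟨j0, hj00, hj0d, hj0eq⟩ := hEbot _ hne0'
    have hθ'i : ∀ i : ℤ, e0' * q ^ (2 * i - (d' : ℤ)) = ε0 * q ^ (2 * (j0 + i) - (d:ℤ)) := by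
      intro i
      rw [show 2 * i - (d' : ℤ) = (2 * 0 - (d' : ℤ)) + 2 * i by ring, zpow_add₀ hq0,
        ← mul_assoc, hj0eq, mul_assoc, ← zpow_add₀ hq0,
        show 2 * j0 - (d:ℤ) + 2 * i = 2 * (j0 + i) - (d:ℤ) by ring]
    have hrange : ∀ i : ℤ, 0 ≤ i → i ≤ (d' : ℤ) → 0 ≤ j0 + i ∧ j0 + i ≤ (d:ℤ) := by
      intro i h0 hd2
      have hne : Module.End.eigenspace (kk 0) (e0' * q ^ (2 * i - (d' : ℤ))) ≠ ⊥ := by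
        intro hb
        exact hdec'.ne_bot i h0 hd2 (le_bot_iff.mp (hb ▸ hU'le i))
      obtain ⟨j, hj0', hjd, hjeq⟩ := hEbot _ hne
      have h3 : 2 * j - (d:ℤ) = 2 * (j0 + i) - (d:ℤ) := hvalinj _ _ (by rw [← hjeq, hθ'i i])
      omega
    have hcover : ∀ j : ℤ, 0 ≤ j → j ≤ (d:ℤ) → ∃ i : ℤ, 0 ≤ i ∧ i ≤ (d':ℤ) ∧ j = j0 + i := by
      intro j hjl hjd
      by_contra hcon
      push_neg at hcon
      apply hUne j hjl hjd
      rw [hUE j]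
      have hind := iSupIndep_def.mp (Module.End.eigenspaces_iSupIndep (kk 0))
        (ε0 * q ^ (2 * j - (d:ℤ)))
      refine hind.eq_bot_of_le (le_trans le_top ?_)
      rw [← hdec'.sup_eq_top]
      refine iSup_le fun i => ?_
      rcases lt_or_ge i 0 with hi | hi
      · rw [hdec'.bot_of_lt i hi]; exact bot_le
      rcases le_or_gt (d' : ℤ) i with hi2 | hi2
      rcases lt_or_eq_of_le hi2 with hi3 | hi3
      · rw [hdec'.bot_of_gt i hi3]; exact bot_le
      all_goals {
        refine le_trans (hU'le i) ?_
        rw [hθ'i i]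
        have hne : ε0 * q ^ (2 * (j0 + i) - (d:ℤ)) ≠ ε0 * q ^ (2 * j - (d:ℤ)) := by
          intro hc
          have h5 := hvalinj _ _ hc
          exact hcon i hi (by omega) (by omega)
        exact le_iSup_of_le _ (le_iSup_of_le hne le_rfl) }
    have hdd : j0 = 0 ∧ (d' : ℤ) + j0 = (d:ℤ) := by
      obtain ⟨i1, hi10, hi1d, hi1⟩ := hcover 0 le_rfl (Int.natCast_nonneg d)
      obtain ⟨i2, hi20, hi2d, hi2⟩ := hcover (d:ℤ) (Int.natCast_nonneg d) le_rfl
      have h1 := hrange (d':ℤ) (Int.natCast_nonneg d') le_rfl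
      omega
    obtain ⟨hj0z, hsum⟩ := hdd
    have hd'd : d' = d := by omega
    subst hd'd
    have he0 : e0' = ε0 := by
      have h1 := hθ'i 0
      rw [hj0z, show 2 * ((0:ℤ) + 0) - (d:ℤ) = 2 * 0 - (d:ℤ) by ring] at h1
      exact mul_right_cancel₀ (zpow_ne_zero _ hq0) h1
    have he1 : e1' = ε1 := by
      obtain ⟨v, hv, hvne⟩ :=
        Submodule.exists_mem_ne_zero_of_ne_bot (hdec'.ne_bot 0 le_rfl (Int.natCast_nonneg d))
      have hvU : v ∈ U 0 := by
        rw [hUE 0]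
        refine Module.End.mem_eigenspace_iff.mpr ?_
        have h2 := hU'E 0 v hv
        rwa [he0] at h2
      have h1 : kk 1 v = (e1' * q ^ ((d:ℤ) - 2 * 0)) • v := by
        have h2 := hk1' 0
        rw [Submodule.eq_bot_iff] at h2
        have h3 := h2 _ ⟨v, hv, rfl⟩
        rwa [LinearMap.sub_apply, LinearMap.smul_apply, Module.End.one_apply, sub_eq_zero] at h3
      have hscc : γ * (ε0 * q ^ (2 * (0:ℤ) - (d:ℤ)))⁻¹ = ε1 * q ^ ((d:ℤ) - 2 * 0) := by
        rw [hε1def, mul_inv, ← zpow_neg, ← mul_assoc]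
        congr 2
        ring
      have h4 : kk 1 v = (ε1 * q ^ ((d:ℤ) - 2 * 0)) • v := by
        rw [happk1 v, hkinvU hvU, smul_smul, hscc]
      have h5 : (e1' * q ^ ((d:ℤ) - 2 * 0) - ε1 * q ^ ((d:ℤ) - 2 * 0)) • v = 0 := by
        rw [sub_smul, ← h1, ← h4, sub_self]
      rcases smul_eq_zero.mp h5 with h6 | h6
      · exact mul_right_cancel₀ (zpow_ne_zero _ hq0) (sub_eq_zero.mp h6)
      · exact absurd h6 hvne
    have hU'leU : ∀ i : ℤ, U' i ≤ U i := by
      intro i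
      rcases lt_or_ge i 0 with hi | hi
      · rw [hdec'.bot_of_lt i hi]; exact bot_le
      rcases le_or_gt i (d:ℤ) with hi2 | hi2
      · have h1 := hU'le i
        rw [he0] at h1
        rw [hUE i]
        exact h1
      · rw [hdec'.bot_of_gt i hi2]; exact bot_le
    refine ⟨he0, he1, rfl, ?_⟩
    funext i
    refine le_antisymm (hU'leU i) ?_
    have hdisj := iSupIndep_def.mp hUind i
    have htop : (⊤ : Submodule K V) ≤ U' i ⊔ ⨆ j, ⨆ _ : j ≠ i, U j := by
      rw [← hdec'.sup_eq_top]
      refine iSup_le fun j => ?_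
      by_cases hji : j = i
      · subst hji
        exact le_sup_left
      · exact le_trans (hU'leU j)
          (le_trans (le_iSup_of_le j (le_iSup (fun _ : j ≠ i => U j) hji)) le_sup_right)
    have hSbot : (⨆ j, ⨆ _ : j ≠ i, U j) ⊓ U i = ⊥ := by
      rw [inf_comm]
      exact disjoint_iff.mp hdisj
    have hcalc : U i = U' i := by
      calc U i = (U' i ⊔ ⨆ j, ⨆ _ : j ≠ i, U j) ⊓ U i :=
            le_antisymm (le_inf (le_trans le_top htop) le_rfl) inf_le_right
      _ = U' i ⊔ ((⨆ j, ⨆ _ : j ≠ i, U j) ⊓ U i) := sup_inf_assoc_of_le _ (hU'leU i)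
      _ = U' i := by rw [hSbot, sup_bot_eq]
    exact hcalc.le
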